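/- For the Dzektser equation operators: with Z = L²(0,π), D(A) = {x ∈ H⁴(0,π) ∩ H¹₀(0,π) : x''(0) = x''(π) = 0}, Ex = x + x'' and Ax = x'' + 2x⁽⁴⁾, one has Re⟨Ax, Ex⟩_{L²} = −‖x'‖² + ‖x''‖² − 2‖x⁽³⁾‖² − 2Re∫₀^π x⁽³⁾ x̄' dζ ≤ ‖x''‖² − ‖x⁽³⁾‖² ≤ 0 for all x ∈ D(A). -/

import Mathlib

open Real ComplexConjugate intervalIntegral
open scoped RealInnerProductSpace

lemma norm_sq_complex (z : ℂ) : ‖z‖^2 = z.re^2+z.im^2 := by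
  rw [Complex.sq_norm, Complex.normSq_apply]; ring

lemma inner_complex (z w : ℂ) : ⟪z, w⟫ = z.re * w.re + z.im * w.im := by
  simp [inner, Complex.mul_re]; ring

lemma key_alg (ar ai br bi s c : ℝ) (hs : s ≠ 0) :
    (-s*s - c*c)/s^2 * (br^2+bi^2) + (c/s) * ((br*ar + bi*ai) + (ar*br + ai*bi))
      = (ar^2+ai^2) - (br^2+bi^2)
        - ((ar - (c/s)*br)^2 + (ai - (c/s)*bi)^2) := by
  field_simp
  ring

lemma G_hasDerivAt (f : ℝ → ℂ) (d : ℂ) {t : ℝ} (hd : HasDerivAt f d t) (ht : Real.sin t ≠ 0) :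
    HasDerivAt (fun s => (Real.cos s / Real.sin s) * ‖f s‖^2)
      (‖d‖^2 - ‖f t‖^2 - ‖d - ((Real.cos t / Real.sin t : ℝ) : ℂ) * f t‖^2) t := by
  have hg : HasDerivAt (fun s => Real.cos s / Real.sin s)
      ((-Real.sin t * Real.sin t - Real.cos t * Real.cos t) / Real.sin t ^ 2) t :=
    (Real.hasDerivAt_cos t).div (Real.hasDerivAt_sin t) ht
  have hφ : HasDerivAt (fun s => ‖f s‖^2) (⟪f t, d⟫ + ⟪d, f t⟫) t := by
    have := (hd.inner ℝ hd)
    simpa [real_inner_self_eq_norm_sq] using this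
  have : HasDerivAt (fun s => (Real.cos s / Real.sin s) * ‖f s‖^2) _ t := hg.mul hφ
  convert this using 1
  rw [inner_complex, inner_complex, norm_sq_complex (f t), norm_sq_complex d, norm_sq_complex]
  have h1 : (d - ((Real.cos t / Real.sin t : ℝ) : ℂ) * f t).re
      = d.re - (Real.cos t / Real.sin t) * (f t).re := by
    simp [Complex.sub_re, Complex.mul_re, -Complex.ofReal_div]
  have h2 : (d - ((Real.cos t / Real.sin t : ℝ) : ℂ) * f t).im
      = d.im - (Real.cos t / Real.sin t) * (f t).im := by
    simp [Complex.sub_im, Complex.mul_im, -Complex.ofReal_div]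
  rw [h1, h2]
  have := key_alg d.re d.im (f t).re (f t).im (Real.sin t) (Real.cos t) ht
  linarith [this]

lemma wirtinger (f : ℝ → ℂ) (hf : ContDiff ℝ 1 f) (h0 : f 0 = 0) (hπ : f π = 0) :
    ∫ t in (0:ℝ)..π, ‖f t‖^2 ≤ ∫ t in (0:ℝ)..π, ‖deriv f t‖^2 := by
  have hdiff : Differentiable ℝ f := hf.differentiable one_ne_zero
  have hd_cont : Continuous (deriv f) := by
    have h := (contDiff_succ_iff_deriv (n := 0)).mp (by exact_mod_cast hf)
    exact h.2.2.continuous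
  have hfc : Continuous f := hf.continuous
  set φ : ℝ → ℝ := fun t => ‖f t‖^2 with hφdef
  set ψ : ℝ → ℝ := fun t => ‖deriv f t‖^2 with hψdef
  have hφc : Continuous φ := (hfc.norm.pow 2)
  have hψc : Continuous ψ := (hd_cont.norm.pow 2)
  -- bounds
  obtain ⟨M₀, hM₀⟩ := (isCompact_Icc (a := (0:ℝ)) (b := π)).exists_bound_of_continuousOn
    hd_cont.continuousOn
  set M := max M₀ 1 with hM
  have hM1 : (0:ℝ) < M := lt_of_lt_of_le one_pos (le_max_right _ _)
  have hMb : ∀ t ∈ Set.Icc (0:ℝ) π, ‖deriv f t‖ ≤ M := fun t ht =>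
    (hM₀ t ht).trans (le_max_left _ _)
  obtain ⟨B₀, hB₀⟩ := (isCompact_Icc (a := (0:ℝ)) (b := π)).exists_bound_of_continuousOn
    hfc.continuousOn
  set B := max B₀ 0 with hB
  have hBb : ∀ t ∈ Set.Icc (0:ℝ) π, ‖f t‖ ≤ B := fun t ht =>
    (hB₀ t ht).trans (le_max_left _ _)
  have hB0 : (0:ℝ) ≤ B := le_max_right _ _
  -- edge bound on |φ - ψ|
  have hedge : ∀ t ∈ Set.Icc (0:ℝ) π, |φ t - ψ t| ≤ B^2 + M^2 := by
    intro t ht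
    have h1 : φ t ≤ B^2 := by
      have := hBb t ht
      simpa [hφdef] using pow_le_pow_left₀ (norm_nonneg _) this 2
    have h2 : ψ t ≤ M^2 := by
      have := hMb t ht
      simpa [hψdef] using pow_le_pow_left₀ (norm_nonneg _) this 2
    have h3 : (0:ℝ) ≤ φ t := by positivity
    have h4 : (0:ℝ) ≤ ψ t := by positivity
    rw [abs_le]; constructor <;> nlinarith
  -- small f near endpoints
  have hsmall0 : ∀ ε : ℝ, 0 < ε → ε ≤ π → ‖f ε‖ ≤ M * ε := by
    intro ε hε hεπ
    have heq : ∫ t in (0:ℝ)..ε, deriv f t = f ε - f 0 :=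
      integral_eq_sub_of_hasDerivAt (fun t _ => (hdiff t).hasDerivAt)
        (hd_cont.intervalIntegrable _ _)
    have hb : ‖∫ t in (0:ℝ)..ε, deriv f t‖ ≤ M * |ε - 0| := by
      apply norm_integral_le_of_norm_le_const
      intro t ht
      rw [Set.uIoc_of_le hε.le] at ht
      exact hMb t ⟨ht.1.le, ht.2.trans hεπ⟩
    rw [heq, h0, sub_zero] at hb
    simpa [abs_of_pos hε] using hb
  have hsmallπ : ∀ ε : ℝ, 0 < ε → ε ≤ π → ‖f (π - ε)‖ ≤ M * ε := by
    intro ε hε hεπ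
    have heq : ∫ t in (π - ε)..π, deriv f t = f π - f (π - ε) :=
      integral_eq_sub_of_hasDerivAt (fun t _ => (hdiff t).hasDerivAt)
        (hd_cont.intervalIntegrable _ _)
    have hb : ‖∫ t in (π - ε)..π, deriv f t‖ ≤ M * |π - (π - ε)| := by
      apply norm_integral_le_of_norm_le_const
      intro t ht
      rw [Set.uIoc_of_le (by linarith)] at ht
      exact hMb t ⟨by linarith [ht.1], ht.2⟩
    rw [heq, hπ, zero_sub, norm_neg] at hb
    simpa [abs_of_pos hε] using hb
  -- main estimate on the truncated interval
  have main : ∀ ε : ℝ, 0 < ε → ε ≤ π/2 →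
      ∫ t in ε..(π-ε), (φ t - ψ t) ≤ 4 * M^2 * ε := by
    intro ε hε hε2
    have hππ : (0:ℝ) < π := Real.pi_pos
    have hεle : ε ≤ π - ε := by linarith
    have hsin : ∀ t ∈ Set.Icc ε (π - ε), 0 < Real.sin t := by
      intro t ht
      exact Real.sin_pos_of_pos_of_lt_pi (lt_of_lt_of_le hε ht.1) (by linarith [ht.2])
    set G : ℝ → ℝ := fun s => (Real.cos s / Real.sin s) * ‖f s‖^2 with hGdef
    set h : ℝ → ℝ := fun t => ‖deriv f t - ((Real.cos t / Real.sin t : ℝ) : ℂ) * f t‖^2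
      with hhdef
    have hIcc : Set.uIcc ε (π - ε) = Set.Icc ε (π - ε) := Set.uIcc_of_le hεle
    have hderivG : ∀ t ∈ Set.uIcc ε (π - ε), HasDerivAt G (ψ t - φ t - h t) t := by
      intro t ht
      rw [hIcc] at ht
      exact G_hasDerivAt f (deriv f t) (hdiff t).hasDerivAt (ne_of_gt (hsin t ht))
    have hcont_h : ContinuousOn h (Set.uIcc ε (π - ε)) := by
      rw [hIcc]
      apply ContinuousOn.pow
      apply ContinuousOn.norm
      apply ContinuousOn.sub hd_cont.continuousOn
      apply ContinuousOn.mul _ hfc.continuousOn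
      apply Continuous.comp_continuousOn Complex.continuous_ofReal
      exact (Real.continuous_cos.continuousOn.div Real.continuous_sin.continuousOn
        (fun t ht => ne_of_gt (hsin t ht)))
    have hint_h : IntervalIntegrable h MeasureTheory.volume ε (π - ε) :=
      hcont_h.intervalIntegrable
    have hint_φψ : IntervalIntegrable (fun t => ψ t - φ t) MeasureTheory.volume ε (π - ε) :=
      ((hψc.sub hφc).intervalIntegrable _ _)
    have hFTC : ∫ t in ε..(π-ε), (ψ t - φ t - h t) = G (π - ε) - G ε :=
      integral_eq_sub_of_hasDerivAt hderivG (hint_φψ.sub hint_h)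
    have hsplit : ∫ t in ε..(π-ε), (ψ t - φ t - h t)
        = (∫ t in ε..(π-ε), (ψ t - φ t)) - ∫ t in ε..(π-ε), h t :=
      integral_sub hint_φψ hint_h
    have hh_nonneg : 0 ≤ ∫ t in ε..(π-ε), h t := by
      apply integral_nonneg hεle
      intro t _; positivity
    have hkey : ∫ t in ε..(π-ε), (φ t - ψ t) ≤ G ε - G (π - ε) := by
      have : ∫ t in ε..(π-ε), (φ t - ψ t) = -(∫ t in ε..(π-ε), (ψ t - φ t)) := by
        rw [← integral_neg]; congr 1; ext t; ring
      rw [this]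
      have := hFTC
      rw [hsplit] at this
      linarith
    -- bound G ε and -G (π-ε)
    have hsinε : (2/π) * ε ≤ Real.sin ε := Real.mul_le_sin hε.le hε2
    have hsinεpos : 0 < Real.sin ε := lt_of_lt_of_le (by positivity) hsinε
    have hπ4 : π ≤ 4 := by linarith [Real.pi_le_four]
    have hbound : ∀ c : ℝ, 0 ≤ c → c ≤ M * ε →
        (Real.cos ε / Real.sin ε) * c^2 ≤ 2 * M^2 * ε := by
      intro c hc hcM
      rw [div_mul_eq_mul_div, div_le_iff₀ hsinεpos]
      have e1 : Real.cos ε * c^2 ≤ c^2 :=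
        mul_le_of_le_one_left (by positivity) (Real.cos_le_one ε)
      have e2 : c^2 ≤ M^2*ε^2 := by nlinarith
      have e3 : 2*M^2*ε*((2/π)*ε) ≤ 2*M^2*ε*(Real.sin ε) := by
        apply mul_le_mul_of_nonneg_left hsinε; positivity
      have e4 : 2*M^2*ε*((2/π)*ε) = (4/π)*(M^2*ε^2) := by ring
      have e5 : M^2*ε^2 ≤ (4/π)*(M^2*ε^2) := by
        apply le_mul_of_one_le_left (by positivity)
        rw [le_div_iff₀ Real.pi_pos]; linarith
      linarith
    have hGε : G ε ≤ 2 * M^2 * ε :=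
      hbound ‖f ε‖ (norm_nonneg _) (hsmall0 ε hε (by linarith))
    have hGπε : -G (π - ε) ≤ 2 * M^2 * ε := by
      have : G (π - ε) = -((Real.cos ε / Real.sin ε) * ‖f (π - ε)‖^2) := by
        simp only [hGdef, Real.cos_pi_sub, Real.sin_pi_sub]
        ring
      rw [this, neg_neg]
      exact hbound ‖f (π - ε)‖ (norm_nonneg _) (hsmallπ ε hε (by linarith))
    calc ∫ t in ε..(π-ε), (φ t - ψ t) ≤ G ε - G (π - ε) := hkey
      _ ≤ 2 * M^2 * ε + 2 * M^2 * ε := by linarith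
      _ = 4 * M^2 * ε := by ring
  -- edge integrals and conclusion
  have hππ : (0:ℝ) < π := Real.pi_pos
  set D : ℝ := 4 * M^2 + 2 * (B^2 + M^2) with hD
  have hD0 : 0 ≤ D := by positivity
  have hint : ∀ a b : ℝ, IntervalIntegrable (fun t => φ t - ψ t) MeasureTheory.volume a b :=
    fun a b => ((hφc.sub hψc).intervalIntegrable _ _)
  have hall : ∀ ε : ℝ, 0 < ε → ε ≤ π/2 → ∫ t in (0:ℝ)..π, (φ t - ψ t) ≤ D * ε := by
    intro ε hε hε2
    have hsplit1 : (∫ t in (0:ℝ)..ε, (φ t - ψ t)) + (∫ t in ε..(π-ε), (φ t - ψ t))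
        = ∫ t in (0:ℝ)..(π-ε), (φ t - ψ t) :=
      integral_add_adjacent_intervals (hint _ _) (hint _ _)
    have hsplit2 : (∫ t in (0:ℝ)..(π-ε), (φ t - ψ t)) + (∫ t in (π-ε)..π, (φ t - ψ t))
        = ∫ t in (0:ℝ)..π, (φ t - ψ t) :=
      integral_add_adjacent_intervals (hint _ _) (hint _ _)
    have hedge1 : |∫ t in (0:ℝ)..ε, (φ t - ψ t)| ≤ (B^2 + M^2) * ε := by
      have := norm_integral_le_of_norm_le_const (C := B^2 + M^2)
        (f := fun t => φ t - ψ t) (a := 0) (b := ε) ?_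
      · simpa [abs_of_pos hε] using this
      · intro t ht
        rw [Set.uIoc_of_le hε.le] at ht
        exact hedge t ⟨ht.1.le, by linarith [ht.2]⟩
    have hedge2 : |∫ t in (π-ε)..π, (φ t - ψ t)| ≤ (B^2 + M^2) * ε := by
      have := norm_integral_le_of_norm_le_const (C := B^2 + M^2)
        (f := fun t => φ t - ψ t) (a := π - ε) (b := π) ?_
      · have h2 : |π - (π - ε)| = ε := by rw [abs_of_pos (by linarith)]; ring
        rw [h2] at this
        exact this
      · intro t ht
        rw [Set.uIoc_of_le (by linarith)] at ht
        exact hedge t ⟨by linarith [ht.1], ht.2⟩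
    have hmid := main ε hε hε2
    have h1 := abs_le.mp hedge1
    have h2 := abs_le.mp hedge2
    rw [hD]
    linarith
  have hfinal : ∫ t in (0:ℝ)..π, (φ t - ψ t) ≤ 0 := by
    by_contra hcon
    push_neg at hcon
    set a := ∫ t in (0:ℝ)..π, (φ t - ψ t) with ha
    set ε := min (π/2) (a/(2*(D+1))) with hε
    have hεpos : 0 < ε := lt_min (by positivity) (by positivity)
    have hεle : ε ≤ π/2 := min_le_left _ _
    have := hall ε hεpos hεle
    have h2 : D * ε ≤ (D+1) * (a/(2*(D+1))) := by
      apply mul_le_mul (by linarith) (min_le_right _ _) hεpos.le (by linarith)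
    have h3 : (D+1) * (a/(2*(D+1))) = a/2 := by
      field_simp
    rw [h3] at h2
    clear_value a ε
    have h4 : a ≤ a / 2 := this.trans h2
    have h5 : a / 2 < a := half_lt_self hcon
    exact absurd h4 (not_le.mpr h5)
  have hsub : ∫ t in (0:ℝ)..π, (φ t - ψ t)
      = (∫ t in (0:ℝ)..π, φ t) - ∫ t in (0:ℝ)..π, ψ t :=
    integral_sub (hφc.intervalIntegrable 0 π) (hψc.intervalIntegrable 0 π)
  rw [hsub] at hfinal
  linarith

lemma peel {n : ℕ} (x : ℝ → ℂ) (hx : ContDiff ℝ (n+1) x) :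
    ContDiff ℝ n (deriv x) ∧ Differentiable ℝ x := by
  have h := (contDiff_succ_iff_deriv (n := n)).mp (by exact_mod_cast hx)
  exact ⟨h.2.2, h.1⟩

lemma ibp (f g : ℝ → ℂ) (hf : ContDiff ℝ 1 f) (hg : ContDiff ℝ 1 g) (a b : ℝ) :
    ∫ t in a..b, (deriv f t * (starRingEnd ℂ) (g t) + f t * (starRingEnd ℂ) (deriv g t))
      = f b * (starRingEnd ℂ) (g b) - f a * (starRingEnd ℂ) (g a) := by
  have hf' : Continuous (deriv f) := ((peel (n := 0) f hf).1).continuous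
  have hg' : Continuous (deriv g) := ((peel (n := 0) g hg).1).continuous
  have key : ∀ t ∈ Set.uIcc a b, HasDerivAt (fun s => f s * (starRingEnd ℂ) (g s))
      (deriv f t * (starRingEnd ℂ) (g t) + f t * (starRingEnd ℂ) (deriv g t)) t := by
    intro t _
    have h1 : HasDerivAt f (deriv f t) t := ((peel (n:=0) f hf).2 t).hasDerivAt
    have h2 : HasDerivAt g (deriv g t) t := ((peel (n:=0) g hg).2 t).hasDerivAt
    have h3 : HasDerivAt (fun s => (starRingEnd ℂ) (g s)) ((starRingEnd ℂ) (deriv g t)) t :=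
      h2.star
    exact h1.mul h3
  exact intervalIntegral.integral_eq_sub_of_hasDerivAt key
    (((hf'.mul (hg.continuous.star)).add (hf.continuous.mul hg'.star)).intervalIntegrable a b)

lemma conj_cont {g : ℝ → ℂ} (hg : Continuous g) :
    Continuous (fun t => (starRingEnd ℂ) (g t)) := by
  exact continuous_star.comp hg

lemma conj_self_integral (g : ℝ → ℂ) (a b : ℝ) :
    ∫ t in a..b, g t * (starRingEnd ℂ) (g t) = ((∫ t in a..b, ‖g t‖^2 : ℝ) : ℂ) := by
  rw [← intervalIntegral.integral_ofReal]
  apply intervalIntegral.integral_congr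
  intro t _
  show g t * (starRingEnd ℂ) (g t) = ((‖g t‖^2 : ℝ) : ℂ)
  rw [Complex.mul_conj]
  norm_cast
  rw [Complex.sq_norm]

lemma amgm_complex (a b : ℂ) : -2*(a * (starRingEnd ℂ) b).re ≤ ‖a‖^2 + ‖b‖^2 := by
  have h1 : (a * (starRingEnd ℂ) b).re = a.re*b.re + a.im*b.im := by
    rw [Complex.mul_re, Complex.conj_re, Complex.conj_im]; ring
  rw [h1, norm_sq_complex, norm_sq_complex]
  nlinarith [sq_nonneg (a.re+b.re), sq_nonneg (a.im+b.im)]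

/-- Dzektser equation dissipativity. For `x` (smooth enough) on `(0,π)` with
`x(0)=x(π)=0`, `x''(0)=x''(π)=0`, `Ex = x + x''`, `Ax = x'' + 2x⁽⁴⁾`:
`Re⟨Ax,Ex⟩ = −‖x'‖² + ‖x''‖² − 2‖x⁽³⁾‖² − 2Re∫₀^π x⁽³⁾ x̄' ≤ ‖x''‖² − ‖x⁽³⁾‖² ≤ 0`. -/
theorem stmt16 (x : ℝ → ℂ) (hx : ContDiff ℝ 4 x)
    (hb0 : x 0 = 0) (hbπ : x π = 0)
    (hb0'' : deriv (deriv x) 0 = 0) (hbπ'' : deriv (deriv x) π = 0) :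
    (∫ t in (0:ℝ)..π,
        (deriv (deriv x) t + 2 * deriv (deriv (deriv (deriv x))) t) *
          (starRingEnd ℂ) (x t + deriv (deriv x) t)).re
      = -(∫ t in (0:ℝ)..π, ‖deriv x t‖ ^ 2)
        + (∫ t in (0:ℝ)..π, ‖deriv (deriv x) t‖ ^ 2)
        - 2 * (∫ t in (0:ℝ)..π, ‖deriv (deriv (deriv x)) t‖ ^ 2)
        - 2 * (∫ t in (0:ℝ)..π,
            deriv (deriv (deriv x)) t * (starRingEnd ℂ) (deriv x t)).re ∧
    (∫ t in (0:ℝ)..π,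
        (deriv (deriv x) t + 2 * deriv (deriv (deriv (deriv x))) t) *
          (starRingEnd ℂ) (x t + deriv (deriv x) t)).re
      ≤ (∫ t in (0:ℝ)..π, ‖deriv (deriv x) t‖ ^ 2)
        - (∫ t in (0:ℝ)..π, ‖deriv (deriv (deriv x)) t‖ ^ 2) ∧
    (∫ t in (0:ℝ)..π,
        (deriv (deriv x) t + 2 * deriv (deriv (deriv (deriv x))) t) *
          (starRingEnd ℂ) (x t + deriv (deriv x) t)).re ≤ 0 := by
  set u := deriv x with hu
  set v := deriv u with hv
  set w := deriv v with hw
  set z := deriv w with hz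
  -- smoothness
  have hx1 : ContDiff ℝ 1 x := hx.of_le (by norm_num)
  have hu3 : ContDiff ℝ 3 u := (peel (n:=3) x (by exact_mod_cast hx)).1
  have hu1 : ContDiff ℝ 1 u := hu3.of_le (by norm_num)
  have hv2 : ContDiff ℝ 2 v := (peel (n:=2) u (by exact_mod_cast hu3)).1
  have hv1 : ContDiff ℝ 1 v := hv2.of_le (by norm_num)
  have hw1 : ContDiff ℝ 1 w := (peel (n:=1) v (by exact_mod_cast hv2)).1
  have hzc : Continuous z := (peel (n:=0) w hw1).1.continuous
  have hxc : Continuous x := hx.continuous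
  have huc : Continuous u := hu3.continuous
  have hvc : Continuous v := hv2.continuous
  have hwc : Continuous w := hw1.continuous
  -- real integrals
  set NU : ℝ := ∫ t in (0:ℝ)..π, ‖u t‖^2 with hNU
  set NV : ℝ := ∫ t in (0:ℝ)..π, ‖v t‖^2 with hNV
  set NW : ℝ := ∫ t in (0:ℝ)..π, ‖w t‖^2 with hNW
  -- integrability of products
  have hIvx : IntervalIntegrable (fun t => v t * (starRingEnd ℂ) (x t))
      MeasureTheory.volume 0 π := ((hvc.mul (conj_cont hxc)).intervalIntegrable _ _)
  have hIuu : IntervalIntegrable (fun t => u t * (starRingEnd ℂ) (u t))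
      MeasureTheory.volume 0 π := ((huc.mul (conj_cont huc)).intervalIntegrable _ _)
  have hIzx : IntervalIntegrable (fun t => z t * (starRingEnd ℂ) (x t))
      MeasureTheory.volume 0 π := ((hzc.mul (conj_cont hxc)).intervalIntegrable _ _)
  have hIwu : IntervalIntegrable (fun t => w t * (starRingEnd ℂ) (u t))
      MeasureTheory.volume 0 π := ((hwc.mul (conj_cont huc)).intervalIntegrable _ _)
  have hIvv : IntervalIntegrable (fun t => v t * (starRingEnd ℂ) (v t))
      MeasureTheory.volume 0 π := ((hvc.mul (conj_cont hvc)).intervalIntegrable _ _)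
  have hIzv : IntervalIntegrable (fun t => z t * (starRingEnd ℂ) (v t))
      MeasureTheory.volume 0 π := ((hzc.mul (conj_cont hvc)).intervalIntegrable _ _)
  have hIww : IntervalIntegrable (fun t => w t * (starRingEnd ℂ) (w t))
      MeasureTheory.volume 0 π := ((hwc.mul (conj_cont hwc)).intervalIntegrable _ _)
  -- integration by parts identities
  have A1 : (∫ t in (0:ℝ)..π, v t * (starRingEnd ℂ) (x t))
      + (∫ t in (0:ℝ)..π, u t * (starRingEnd ℂ) (u t)) = 0 := by
    rw [← intervalIntegral.integral_add hIvx hIuu]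
    have := ibp u x hu1 hx1 0 π
    rw [hb0, hbπ] at this
    simpa using this
  have A2 : (∫ t in (0:ℝ)..π, z t * (starRingEnd ℂ) (x t))
      + (∫ t in (0:ℝ)..π, w t * (starRingEnd ℂ) (u t)) = 0 := by
    rw [← intervalIntegral.integral_add hIzx hIwu]
    have := ibp w x hw1 hx1 0 π
    rw [hb0, hbπ] at this
    simpa using this
  have A3 : (∫ t in (0:ℝ)..π, w t * (starRingEnd ℂ) (u t))
      + (∫ t in (0:ℝ)..π, v t * (starRingEnd ℂ) (v t)) = 0 := by
    rw [← intervalIntegral.integral_add hIwu hIvv]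
    have := ibp v u hv1 hu1 0 π
    rw [show v π = 0 from hbπ'', show v 0 = 0 from hb0''] at this
    simpa using this
  have A4 : (∫ t in (0:ℝ)..π, z t * (starRingEnd ℂ) (v t))
      + (∫ t in (0:ℝ)..π, w t * (starRingEnd ℂ) (w t)) = 0 := by
    rw [← intervalIntegral.integral_add hIzv hIww]
    have := ibp w v hw1 hv1 0 π
    rw [show v π = 0 from hbπ'', show v 0 = 0 from hb0''] at this
    simpa using this
  -- self products are real
  have Suu : (∫ t in (0:ℝ)..π, u t * (starRingEnd ℂ) (u t)) = ((NU : ℝ) : ℂ) :=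
    conj_self_integral u 0 π
  have Svv : (∫ t in (0:ℝ)..π, v t * (starRingEnd ℂ) (v t)) = ((NV : ℝ) : ℂ) :=
    conj_self_integral v 0 π
  have Sww : (∫ t in (0:ℝ)..π, w t * (starRingEnd ℂ) (w t)) = ((NW : ℝ) : ℂ) :=
    conj_self_integral w 0 π
  -- individual integrals
  have Evx : (∫ t in (0:ℝ)..π, v t * (starRingEnd ℂ) (x t)) = -((NU : ℝ) : ℂ) := by
    rw [Suu] at A1; linear_combination A1
  have Ewu : (∫ t in (0:ℝ)..π, w t * (starRingEnd ℂ) (u t)) = -((NV : ℝ) : ℂ) := by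
    rw [Svv] at A3; linear_combination A3
  have Ezx : (∫ t in (0:ℝ)..π, z t * (starRingEnd ℂ) (x t)) = ((NV : ℝ) : ℂ) := by
    rw [Ewu] at A2; linear_combination A2
  have Ezv : (∫ t in (0:ℝ)..π, z t * (starRingEnd ℂ) (v t)) = -((NW : ℝ) : ℂ) := by
    rw [Sww] at A4; linear_combination A4
  -- expand the main integral
  have hmain : (∫ t in (0:ℝ)..π, (v t + 2 * z t) * (starRingEnd ℂ) (x t + v t))
      = ((-NU + 3*NV - 2*NW : ℝ) : ℂ) := by
    have hexp : ∫ t in (0:ℝ)..π, (v t + 2 * z t) * (starRingEnd ℂ) (x t + v t)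
        = ∫ t in (0:ℝ)..π, (v t * (starRingEnd ℂ) (x t) + v t * (starRingEnd ℂ) (v t)
            + (2:ℂ) * (z t * (starRingEnd ℂ) (x t)) + (2:ℂ) * (z t * (starRingEnd ℂ) (v t))) := by
      apply intervalIntegral.integral_congr
      intro t _
      show (v t + 2 * z t) * (starRingEnd ℂ) (x t + v t) = _
      rw [map_add]
      ring
    rw [hexp]
    rw [intervalIntegral.integral_add (((hIvx.add hIvv).add (hIzx.const_mul 2)))
      (hIzv.const_mul 2),
      intervalIntegral.integral_add (hIvx.add hIvv) (hIzx.const_mul 2),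
      intervalIntegral.integral_add hIvx hIvv,
      intervalIntegral.integral_const_mul, intervalIntegral.integral_const_mul]
    rw [Evx, Svv, Ezx, Ezv]
    push_cast
    ring
  have hre : (∫ t in (0:ℝ)..π,
      (v t + 2 * z t) * (starRingEnd ℂ) (x t + v t)).re = -NU + 3*NV - 2*NW := by
    rw [hmain, Complex.ofReal_re]
  -- the ⟨w, u⟩ term
  have hwu_re : (∫ t in (0:ℝ)..π, w t * (starRingEnd ℂ) (u t)).re = -NV := by
    rw [Ewu]; simp
  -- 2NV ≤ NU + NW
  have h2NV : 2*NV ≤ NU + NW := by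
    have hptw : ∀ t ∈ Set.Icc (0:ℝ) π, -2*((w t * (starRingEnd ℂ) (u t)).re)
        ≤ ‖w t‖^2 + ‖u t‖^2 := fun t _ => amgm_complex (w t) (u t)
    have hre_int : ∫ t in (0:ℝ)..π, (w t * (starRingEnd ℂ) (u t)).re = -NV := by
      rw [← hwu_re]
      exact Complex.reCLM.intervalIntegral_comp_comm hIwu
    have hLc : Continuous (fun t => -2*((w t * (starRingEnd ℂ) (u t)).re)) := by
      exact (continuous_const.mul (Complex.continuous_re.comp (hwc.mul (conj_cont huc))))
    have hRc : Continuous (fun t => ‖w t‖^2 + ‖u t‖^2) :=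
      ((hwc.norm.pow 2).add (huc.norm.pow 2))
    have := intervalIntegral.integral_mono_on (μ := MeasureTheory.volume) Real.pi_pos.le
      (hLc.intervalIntegrable 0 π) (hRc.intervalIntegrable 0 π) hptw
    rw [intervalIntegral.integral_const_mul, hre_int,
      intervalIntegral.integral_add (f := fun t => ‖w t‖^2) (g := fun t => ‖u t‖^2) ((hwc.norm.pow 2).intervalIntegrable 0 π)
        ((huc.norm.pow 2).intervalIntegrable 0 π)] at this
    have hNW' : (∫ t in (0:ℝ)..π, ‖w t‖^2) = NW := rfl
    have hNU' : (∫ t in (0:ℝ)..π, ‖u t‖^2) = NU := rfl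
    rw [hNW', hNU'] at this
    linarith
  -- Wirtinger for v
  have hNVW : NV ≤ NW := by
    have := wirtinger v hv1 hb0'' hbπ''
    rw [← hw] at this
    exact this
  refine ⟨by rw [hre, hwu_re]; ring, by rw [hre]; linarith, by rw [hre]; linarith⟩
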